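/- For any CA program P, every restart-safe path in the graph EZ_P is finite. -/

import Mathlib

set_option autoImplicit false

namespace EZCSP

/-! ### Regular logic programs -/

/-- A literal: an atom paired with a polarity (`true` = positive atom `a`,
`false` = negated atom `¬ a`). -/
abbrev Lit (α : Type) := α × Bool

/-- The complement of a literal. -/
def complLit {α : Type} (l : Lit α) : Lit α := (l.1, !l.2)

/-- A rule `a₀ ← a₁,…,a_l, not a_{l+1},…,not a_m, not not a_{m+1},…,not not a_n`
of a regular program.  `head = none` represents `⊥` (a denial). -/
structure Rule (α : Type) where
  head : Option α
  pos : Finset α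
  neg : Finset α
  dneg : Finset α
deriving DecidableEq

variable {α V D : Type}

/-- A rule is a denial when its head is `⊥`. -/
def Rule.isDenial (r : Rule α) : Prop := r.head = none

/-- The atoms occurring in a rule. -/
def Rule.atoms [DecidableEq α] (r : Rule α) : Finset α :=
  (r.head.elim (∅ : Finset α) fun a => {a}) ∪ r.pos ∪ r.neg ∪ r.dneg

/-- `At(Π)`: the atoms occurring in a program. -/
def progAtoms [DecidableEq α] (Pi : Finset (Rule α)) : Finset α :=
  Pi.biUnion Rule.atoms

/-- Satisfaction of the body `a₁∧…∧a_l∧¬a_{l+1}∧…∧¬a_m∧a_{m+1}∧…∧a_n` of a rule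
by a set `X` of atoms (viewed as an interpretation). -/
def bodySat (X : Set α) (r : Rule α) : Prop :=
  (∀ a ∈ r.pos, a ∈ X) ∧ (∀ a ∈ r.neg, a ∉ X) ∧ (∀ a ∈ r.dneg, a ∈ X)

/-- Satisfaction of the head of a rule by `X` (`⊥` is never satisfied). -/
def headSat (X : Set α) (r : Rule α) : Prop :=
  ∃ a, r.head = some a ∧ a ∈ X

/-- Satisfaction by `X` of the clause corresponding to a rule. -/
def clauseSat (X : Set α) (r : Rule α) : Prop :=
  bodySat X r → headSat X r

/-- `Y` satisfies `(Π^X)^cl`, the set of clauses of the reduct of `Π` w.r.t. `X`. -/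
def reductModels (Pi : Finset (Rule α)) (X Y : Set α) : Prop :=
  ∀ r ∈ Pi, bodySat X r → (∀ a ∈ r.pos, a ∈ Y) → ∃ a, r.head = some a ∧ a ∈ Y

/-- `X` is an answer set of `Π`: it is subset-minimal among the sets of atoms
satisfying `(Π^X)^cl`. -/
def AnswerSet (Pi : Finset (Rule α)) (X : Set α) : Prop :=
  reductModels Pi X X ∧ ∀ Y : Set α, reductModels Pi X Y → Y ⊆ X → Y = X

/-- `M⁺`: the atoms occurring positively in a set of literals. -/
def Mplus (M : Set (Lit α)) : Set α := {a | (a, true) ∈ M}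

/-- A set of literals is consistent when it contains no complementary pair. -/
def LConsistent (M : Set (Lit α)) : Prop :=
  ∀ a : α, ¬((a, true) ∈ M ∧ (a, false) ∈ M)

/-- `M` is complete over the alphabet `σ`. -/
def LComplete (M : Set (Lit α)) (σ : Finset α) : Prop :=
  ∀ a ∈ σ, (a, true) ∈ M ∨ (a, false) ∈ M

/-- All literals of `M` are over the alphabet `σ`. -/
def LitsOver (M : Set (Lit α)) (σ : Finset α) : Prop :=
  ∀ l ∈ M, l.1 ∈ σ

/-- `U` is unfounded on the set `M` of literals with respect to `Π`:
`U` consists of atoms occurring in `Π` and for every `a ∈ U` and every body `B`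
of a rule of `Π` with head `a`, `M ∩ B̄ ≠ ∅` or `U ∩ B⁺ ≠ ∅`. -/
def UnfoundedOn [DecidableEq α] (Pi : Finset (Rule α)) (M : Set (Lit α)) (U : Set α) : Prop :=
  (∀ a ∈ U, a ∈ progAtoms Pi) ∧
  ∀ r ∈ Pi, ∀ a : α, r.head = some a → a ∈ U →
    ((∃ b ∈ r.pos, (b, false) ∈ M) ∨ (∃ b ∈ r.neg, (b, true) ∈ M) ∨
      (∃ b ∈ r.dneg, (b, false) ∈ M)) ∨ (∃ b ∈ r.pos, b ∈ U)

/-! ### Constraint satisfaction and CA programs -/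

/-- The choice rule `{c}`, i.e. `c ← not not c`. -/
def choiceRule (c : α) : Rule α := ⟨some c, ∅, ∅, {c}⟩

/-- The asp-abstraction `Π[𝒞]`: `Π` extended with a choice rule `{c}` for each `c ∈ 𝒞`. -/
def aspAbs [DecidableEq α] (Pi : Finset (Rule α)) (C : Finset α) : Finset (Rule α) :=
  Pi ∪ C.image choiceRule

/-- A constraint `⟨t, R⟩`: a tuple of variables together with a relation on the domain. -/
structure Constraint (V D : Type) where
  vars : List V
  rel : Set (List D)

/-- An evaluation `ν` satisfies a constraint. -/
def Constraint.sat (c : Constraint V D) (ν : V → D) : Prop := c.vars.map ν ∈ c.rel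

/-- The complement `⟨t, D^k ∖ R⟩` of a constraint `⟨t, R⟩`. -/
def Constraint.compl (c : Constraint V D) : Constraint V D :=
  ⟨c.vars, {l | l.length = c.vars.length ∧ l ∉ c.rel}⟩

/-- The csp-abstraction `K_{P,M}` determined by the constraint atoms `C`, the mapping `γ`
and the set `M` of literals has a solution. -/
def cspSolvable (C : Finset α) (γ : α → Constraint V D) (M : Set (Lit α)) : Prop :=
  ∃ ν : V → D, ∀ c ∈ C,
    ((c, true) ∈ M → (γ c).sat ν) ∧ ((c, false) ∈ M → (γ c).compl.sat ν)

/-- A logic program with constraint atoms (CA program) `⟨Π,𝒞,γ,D⟩`. -/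
structure CAProgram (α V D : Type) [DecidableEq α] where
  prog : Finset (Rule α)
  catoms : Finset α
  γ : α → Constraint V D
  head_not_catom : ∀ r ∈ prog, ∀ a : α, r.head = some a → a ∉ catoms
  catoms_sub : catoms ⊆ progAtoms prog

/-- Answer sets of a CA program with components `Π`, `C`, `γ`:  a consistent and
complete set `M` of literals over `At(Π)` such that `M⁺` is an answer set of `Π[𝒞]`
and `K_{P,M}` has a solution. -/
def CAAnswerSetG [DecidableEq α] (Pi : Finset (Rule α)) (C : Finset α)
    (γ : α → Constraint V D) (M : Set (Lit α)) : Prop :=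
  LConsistent M ∧ LComplete M (progAtoms Pi) ∧ LitsOver M (progAtoms Pi) ∧
    AnswerSet (aspAbs Pi C) (Mplus M) ∧ cspSolvable C γ M

/-- `M` is an answer set of the CA program `P`. -/
def CAProgram.answerSet [DecidableEq α] (P : CAProgram α V D) (M : Set (Lit α)) : Prop :=
  CAAnswerSetG P.prog P.catoms P.γ M

/-- The CA program with components `Π`, `C` asp-entails the denial `G`. -/
def aspEntailsDenial [DecidableEq α] (Pi : Finset (Rule α)) (C : Finset α) (G : Rule α) : Prop :=
  ∀ M : Set (Lit α), LConsistent M → LComplete M (progAtoms Pi) → LitsOver M (progAtoms Pi) →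
    AnswerSet (aspAbs Pi C) (Mplus M) → clauseSat (Mplus M) G

/-- The CA program with components `Π`, `C`, `γ` cp-entails the denial `G`. -/
def cpEntailsDenial [DecidableEq α] (Pi : Finset (Rule α)) (C : Finset α)
    (γ : α → Constraint V D) (G : Rule α) : Prop :=
  (∀ M : Set (Lit α), CAAnswerSetG Pi C γ M → clauseSat (Mplus M) G) ∧
  (∃ N : Set (Lit α), LConsistent N ∧ LComplete N (progAtoms Pi) ∧ LitsOver N (progAtoms Pi) ∧
    AnswerSet (aspAbs Pi C) (Mplus N) ∧ ¬ clauseSat (Mplus N) G)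

/-- The CA program with components `Π`, `C`, `γ` entails the denial `G`. -/
def entailsDenial [DecidableEq α] (Pi : Finset (Rule α)) (C : Finset α)
    (γ : α → Constraint V D) (G : Rule α) : Prop :=
  aspEntailsDenial Pi C G ∨ cpEntailsDenial Pi C γ G

/-- The CA program with components `Π`, `C` asp-entails the literal `l` with respect to
the consistent set `N` of literals. -/
def aspEntailsLit [DecidableEq α] (Pi : Finset (Rule α)) (C : Finset α)
    (N : Set (Lit α)) (l : Lit α) : Prop :=
  ∀ M : Set (Lit α), LConsistent M → LComplete M (progAtoms Pi) → LitsOver M (progAtoms Pi) →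
    AnswerSet (aspAbs Pi C) (Mplus M) → N ⊆ M → l ∈ M

/-- `P[Γ]`: the CA program `P` with the denials of `Γ` added to its program. -/
def CAProgram.addDenials [DecidableEq α] (P : CAProgram α V D) (Γ : Finset (Rule α))
    (hΓ : ∀ r ∈ Γ, r.head = none) : CAProgram α V D where
  prog := P.prog ∪ Γ
  catoms := P.catoms
  γ := P.γ
  head_not_catom := by
    intro r hr a ha
    rcases Finset.mem_union.mp hr with h | h
    · exact P.head_not_catom r h a ha
    · rw [hΓ r h] at ha; simp at ha
  catoms_sub := by
    intro a ha
    have h1 := P.catoms_sub ha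
    unfold progAtoms at h1 ⊢
    rw [Finset.mem_biUnion] at h1 ⊢
    obtain ⟨r, hr, har⟩ := h1
    exact ⟨r, Finset.mem_union_left _ hr, har⟩

/-! ### The transition system `EZ_P` -/

/-- An element of a record: a literal, possibly annotated as a decision literal
(`dec = true`), or the symbol `⊥`. -/
inductive RecElem (α : Type) where
  | lit (l : Lit α) (dec : Bool)
  | bot
deriving DecidableEq

/-- The set of literals occurring in a record (disregarding annotations). -/
def recLits {α : Type} (M : List (RecElem α)) : Set (Lit α) :=
  {l | ∃ d : Bool, RecElem.lit l d ∈ M}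

/-- The underlying "key" of a record element (used to state distinctness). -/
def recKey {α : Type} : RecElem α → Option (Lit α)
  | .lit l _ => some l
  | .bot => none

/-- A record contains no decision literals. -/
def recDecFree {α : Type} (M : List (RecElem α)) : Prop :=
  ∀ l : Lit α, RecElem.lit l true ∉ M

/-- Consistency of (the state determined by) a record: `⊥` does not occur in it and
no atom occurs both positively and negatively. -/
def RecConsistent {α : Type} (M : List (RecElem α)) : Prop :=
  RecElem.bot ∉ M ∧ ∀ a : α, ¬((a, true) ∈ recLits M ∧ (a, false) ∈ recLits M)

/-- A record relative to the alphabet `σ`. -/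
def IsRecord [DecidableEq α] (σ : Finset α) (M : List (RecElem α)) : Prop :=
  (M.map recKey).Nodup ∧
  (∀ l ∈ recLits M, l.1 ∈ σ) ∧
  ((∀ a : α, ¬((a, true) ∈ recLits M ∧ (a, false) ∈ recLits M)) ∨
    ∃ (M' : List (RecElem α)) (l : Lit α) (d : Bool),
      M = M' ++ [RecElem.lit l d] ∧
      (∀ a : α, ¬((a, true) ∈ recLits M' ∧ (a, false) ∈ recLits M')) ∧
      complLit l ∈ recLits M') ∧
  (∀ (M₁ M₂ : List (RecElem α)) (l : Lit α), M = M₁ ++ RecElem.lit l true :: M₂ →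
    l ∉ recLits M₁ ∧ complLit l ∉ recLits M₁) ∧
  (RecElem.bot ∈ M → ∃ M' : List (RecElem α), M = M' ++ [RecElem.bot] ∧ RecElem.bot ∉ M')

/-- A state of the computation: `Failstate` or a triple `M‖Γ‖Λ`. -/
inductive EZState (α : Type) where
  | fail
  | node (M : List (RecElem α)) (Γ Λ : Finset (Rule α))

/-- `Γ` is a set of denials over `At(Π)` entailed by `P`. -/
def DenialsEntailed [DecidableEq α] (P : CAProgram α V D) (Γ : Finset (Rule α)) : Prop :=
  ∀ r ∈ Γ, r.head = none ∧ r.atoms ⊆ progAtoms P.prog ∧ entailsDenial P.prog P.catoms P.γ r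

/-- The nodes of the graph `EZ_P`: states relative to `P`. -/
def IsState [DecidableEq α] (P : CAProgram α V D) : EZState α → Prop
  | .fail => True
  | .node M Γ Λ => IsRecord (progAtoms P.prog) M ∧ DenialsEntailed P Γ ∧ DenialsEntailed P Λ

/-- The names of the transition rules of the graph `EZ_P`. -/
inductive TransLabel where
  | decide | fail | backtrack | aspProp | cpProp | learn | learnT | restart | restartT
deriving DecidableEq

/-- Basic transition rules. -/
def TransLabel.isBasic : TransLabel → Prop
  | .decide => True
  | .fail => True
  | .backtrack => True
  | .aspProp => True
  | .cpProp => True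
  | _ => False

/-- Restart transition rules. -/
def TransLabel.isRestart : TransLabel → Prop
  | .restart => True
  | .restartT => True
  | _ => False

/-- A literal is unassigned by a record. -/
def Unassigned {α : Type} (M : List (RecElem α)) (l : Lit α) : Prop :=
  l ∉ recLits M ∧ complLit l ∉ recLits M

/-- The defining conditions of the transition rules of the graph `EZ_P`. -/
inductive EdgeCond [DecidableEq α] (P : CAProgram α V D) :
    TransLabel → EZState α → EZState α → Prop
  | decide (M : List (RecElem α)) (Γ Λ : Finset (Rule α)) (l : Lit α)
      (h1 : Unassigned M l) (h2 : RecConsistent M) :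
      EdgeCond P .decide (.node M Γ Λ) (.node (M ++ [RecElem.lit l true]) Γ Λ)
  | fail (M : List (RecElem α)) (Γ Λ : Finset (Rule α))
      (h1 : ¬ RecConsistent M) (h2 : recDecFree M) :
      EdgeCond P .fail (.node M Γ Λ) .fail
  | backtrack (M₁ M₂ : List (RecElem α)) (Γ Λ : Finset (Rule α)) (l : Lit α)
      (h1 : ¬ RecConsistent (M₁ ++ RecElem.lit l true :: M₂))
      (h2 : recDecFree M₂) :
      EdgeCond P .backtrack (.node (M₁ ++ RecElem.lit l true :: M₂) Γ Λ)
        (.node (M₁ ++ [RecElem.lit (complLit l) false]) Γ Λ)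
  | aspProp (M : List (RecElem α)) (Γ Λ : Finset (Rule α)) (l : Lit α)
      (h : aspEntailsLit (P.prog ∪ Γ ∪ Λ) P.catoms (recLits M) l) :
      EdgeCond P .aspProp (.node M Γ Λ) (.node (M ++ [RecElem.lit l false]) Γ Λ)
  | cpProp (M : List (RecElem α)) (Γ Λ : Finset (Rule α))
      (h : ¬ cspSolvable P.catoms P.γ (recLits M)) :
      EdgeCond P .cpProp (.node M Γ Λ) (.node (M ++ [RecElem.bot]) Γ Λ)
  | learn (M : List (RecElem α)) (Γ Λ : Finset (Rule α)) (R : Rule α)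
      (h1 : entailsDenial (P.prog ∪ Γ ∪ Λ) P.catoms P.γ R)
      (h2 : R ∉ Γ ∪ Λ) :
      EdgeCond P .learn (.node M Γ Λ) (.node M (insert R Γ) Λ)
  | learnT (M : List (RecElem α)) (Γ Λ : Finset (Rule α)) (R : Rule α)
      (h1 : entailsDenial (P.prog ∪ Γ ∪ Λ) P.catoms P.γ R)
      (h2 : R ∉ Γ ∪ Λ) :
      EdgeCond P .learnT (.node M Γ Λ) (.node M Γ (insert R Λ))
  | restart (M : List (RecElem α)) (Γ Λ : Finset (Rule α)) (h : M ≠ []) :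
      EdgeCond P .restart (.node M Γ Λ) (.node [] Γ Λ)
  | restartT (M : List (RecElem α)) (Γ Λ : Finset (Rule α)) (h : M ≠ []) :
      EdgeCond P .restartT (.node M Γ Λ) (.node [] Γ ∅)

/-- The edges of the graph `EZ_P`: both endpoints are states relative to `P` and the edge
is justified by the transition rule `t`. -/
def Step [DecidableEq α] (P : CAProgram α V D) (t : TransLabel) (s s' : EZState α) : Prop :=
  IsState P s ∧ IsState P s' ∧ EdgeCond P t s s'

/-- A state is semi-terminal when no basic transition rule is applicable to it. -/
def SemiTerminal [DecidableEq α] (P : CAProgram α V D) (s : EZState α) : Prop :=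
  ¬ ∃ (t : TransLabel) (s' : EZState α), t.isBasic ∧ Step P t s s'

/-- The initial state `∅‖∅‖∅`. -/
def initState (α : Type) : EZState α := EZState.node [] ∅ ∅

/-- Reachability in the graph determined by a labeled step relation. -/
def Reach {α : Type} (step : TransLabel → EZState α → EZState α → Prop)
    (s s' : EZState α) : Prop :=
  Relation.ReflTransGen (fun x y => ∃ t : TransLabel, step t x y) s s'

/-- A finite labeled path in the graph determined by a labeled step relation
(only `states 0, …, states len` and `labs 0, …, labs (len-1)` are meaningful). -/
structure LPath {α : Type} (step : TransLabel → EZState α → EZState α → Prop) where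
  len : ℕ
  states : ℕ → EZState α
  labs : ℕ → TransLabel
  valid : ∀ i < len, step (labs i) (states i) (states (i + 1))

/-- A finite path is restart-safe: prior to any edge `e` due to Restart or Restart^t
there is an edge `e'` due to Learn preceding `e` and preceding no other Restart or
Restart^t edge different from `e`. -/
def LPath.RestartSafe {α : Type} {step : TransLabel → EZState α → EZState α → Prop}
    (t : LPath step) : Prop :=
  ∀ i < t.len, (t.labs i).isRestart →
    ∃ j < i, t.labs j = TransLabel.learn ∧
      ∀ k, j < k → k < t.len → (t.labs k).isRestart → k = i

/-- `t` is a subpath of `t'`. -/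
def LPath.Subpath {α : Type} {step : TransLabel → EZState α → EZState α → Prop}
    (t t' : LPath step) : Prop :=
  ∃ d, t.len + d ≤ t'.len ∧ (∀ i ≤ t.len, t.states i = t'.states (d + i)) ∧
    (∀ i < t.len, t.labs i = t'.labs (d + i))

/-- Two finite paths are equal (as paths). -/
def LPath.Equiv {α : Type} {step : TransLabel → EZState α → EZState α → Prop}
    (t t' : LPath step) : Prop :=
  t.len = t'.len ∧ (∀ i ≤ t.len, t.states i = t'.states i) ∧
    (∀ i < t.len, t.labs i = t'.labs i)

/-- An infinite restart-safe sequence of edge labels. -/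
def InfRestartSafe (labs : ℕ → TransLabel) : Prop :=
  ∀ i, (labs i).isRestart →
    ∃ j < i, labs j = TransLabel.learn ∧ ∀ k, j < k → (labs k).isRestart → k = i

/-! ### The measure for Statement 14 -/

/-- The sequence `α(M) = |M₀|,|M₁|,…,|M_p|` of the lengths of the segments of a record
determined by its decision literals. -/
def alphaSeq {α : Type} : List (RecElem α) → List ℕ
  | [] => [0]
  | RecElem.lit _ true :: rest => 0 :: alphaSeq rest
  | _ :: rest =>
    match alphaSeq rest with
    | [] => [1]
    | h :: tl => (h + 1) :: tl

/-- The "smaller" relation on states. -/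
def Smaller [DecidableEq α] : EZState α → EZState α → Prop
  | .node M Γ Λ, .node M' Γ' Λ' =>
      Γ ⊂ Γ' ∨ (Γ = Γ' ∧ Λ ⊂ Λ') ∨
        (Γ = Γ' ∧ Λ = Λ' ∧ List.Lex (· < ·) (alphaSeq M) (alphaSeq M'))
  | _, _ => False

/-! ### The graph `EZSM_P` -/

/-- The set of literals of the clause corresponding to a rule. -/
def clauseLits (r : Rule α) : Set (Lit α) :=
  {l | (∃ a, r.head = some a ∧ l = (a, true)) ∨ (∃ a ∈ r.pos, l = (a, false)) ∨
    (∃ a ∈ r.neg, l = (a, true)) ∨ (∃ a ∈ r.dneg, l = (a, false))}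

/-- The condition of the Unit Propagate rule: there is a clause `C ∨ l` in
`(Π[𝒞]∪Γ∪Λ)^cl`, `M` is consistent, and `M` satisfies `C̄`. -/
def UnitPropCond [DecidableEq α] (P : CAProgram α V D) (Γ Λ : Finset (Rule α))
    (M : List (RecElem α)) (l : Lit α) : Prop :=
  RecConsistent M ∧
    ∃ r ∈ aspAbs P.prog P.catoms ∪ Γ ∪ Λ,
      l ∈ clauseLits r ∧ ∀ l' ∈ clauseLits r, l' ≠ l → complLit l' ∈ recLits M

/-- The condition of the Unfounded rule: `M` is consistent and `l̄ ∈ U` for a set `U`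
unfounded on `M` with respect to `Π[𝒞]∪Γ∪Λ`. -/
def UnfoundedCond [DecidableEq α] (P : CAProgram α V D) (Γ Λ : Finset (Rule α))
    (M : List (RecElem α)) (l : Lit α) : Prop :=
  RecConsistent M ∧
    ∃ U : Set α, UnfoundedOn (aspAbs P.prog P.catoms ∪ Γ ∪ Λ) (recLits M) U ∧
      l.2 = false ∧ l.1 ∈ U

/-- The edges of the graph `EZSM_P`: those edges of `EZ_P` whose `ASP-Propagate`
applications are justified by `Unit Propagate` or `Unfounded`. -/
def StepSM [DecidableEq α] (P : CAProgram α V D) (t : TransLabel) (s s' : EZState α) : Prop :=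
  Step P t s s' ∧
    (t = TransLabel.aspProp →
      ∃ (M : List (RecElem α)) (Γ Λ : Finset (Rule α)) (l : Lit α),
        s = EZState.node M Γ Λ ∧ s' = EZState.node (M ++ [RecElem.lit l false]) Γ Λ ∧
        (UnitPropCond P Γ Λ M l ∨ UnfoundedCond P Γ Λ M l))

/-- A state is semi-terminal in `EZSM_P` when no basic rule of `EZSM_P` applies to it. -/
def SemiTerminalSM [DecidableEq α] (P : CAProgram α V D) (s : EZState α) : Prop :=
  ¬ ∃ (t : TransLabel) (s' : EZState α), t.isBasic ∧ StepSM P t s s'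

/-! ### The graph `EZ^b_P` (black-box configuration) -/

/-- The edge-level restrictions of the black-box strategy. -/
def StepB [DecidableEq α] (P : CAProgram α V D) (t : TransLabel) (s s' : EZState α) : Prop :=
  Step P t s s' ∧
  t ≠ TransLabel.restart ∧
  (t = TransLabel.cpProp →
    ¬ ∃ (t' : TransLabel) (s'' : EZState α),
      (t' = TransLabel.decide ∨ t' = TransLabel.backtrack ∨ t' = TransLabel.fail ∨
        t' = TransLabel.aspProp) ∧ Step P t' s s'') ∧
  (t = TransLabel.learnT → ∀ (M : List (RecElem α)) (Γ Λ Λ' : Finset (Rule α)),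
    s = EZState.node M Γ Λ → s' = EZState.node M Γ Λ' →
    ∀ R ∈ Λ', R ∉ Λ → aspEntailsDenial P.prog P.catoms R) ∧
  (t = TransLabel.learn → ∀ (M : List (RecElem α)) (Γ Γ' Λ : Finset (Rule α)),
    s = EZState.node M Γ Λ → s' = EZState.node M Γ' Λ →
    ∀ R ∈ Γ', R ∉ Γ → cpEntailsDenial P.prog P.catoms P.γ R)

/-- The path-level restrictions of the black-box strategy: Learn applies only immediately
after CP-Propagate, and Restart^t applies immediately after Learn and only then. -/
def BlackBoxPath [DecidableEq α] {P : CAProgram α V D} (t : LPath (StepB P)) : Prop :=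
  (∀ i < t.len, t.labs i = TransLabel.learn → 0 < i ∧ t.labs (i - 1) = TransLabel.cpProp) ∧
  (∀ i < t.len, t.labs i = TransLabel.restartT → 0 < i ∧ t.labs (i - 1) = TransLabel.learn) ∧
  (∀ i, i + 1 < t.len → t.labs i = TransLabel.learn → t.labs (i + 1) = TransLabel.restartT)

/-- A state is semi-terminal in `EZ^b_P` when no basic rule of `EZ^b_P` applies to it. -/
def SemiTerminalB [DecidableEq α] (P : CAProgram α V D) (s : EZState α) : Prop :=
  ¬ ∃ (t : TransLabel) (s' : EZState α), t.isBasic ∧ StepB P t s s'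

/-! ### Auxiliary lemmas for Statement 8 -/

private def incLast : List ℕ → List ℕ
  | [] => []
  | [h] => [h + 1]
  | h :: t => h :: incLast t

private def encL (b : ℕ) : ℕ → List ℕ → ℕ
  | _, [] => 0
  | 0, _ :: _ => 0
  | n + 1, h :: t => (h + 1) * b ^ n + encL b n t

private lemma alphaSeq_ne_nil : ∀ (M : List (RecElem α)), alphaSeq M ≠ []
  | [] => by simp [alphaSeq]
  | RecElem.lit l true :: rest => by simp [alphaSeq]
  | RecElem.lit l false :: rest => by
      cases h : alphaSeq rest <;> simp [alphaSeq, h]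
  | RecElem.bot :: rest => by
      cases h : alphaSeq rest <;> simp [alphaSeq, h]
private lemma alphaSeq_append_dec (A : List (RecElem α)) (l : Lit α) (Bl : List (RecElem α)) :
    alphaSeq (A ++ RecElem.lit l true :: Bl) = alphaSeq A ++ alphaSeq Bl := by
  induction A with
  | nil => simp [alphaSeq]
  | cons x rest ih =>
    cases x with
    | bot =>
      obtain ⟨h, tl, hh⟩ : ∃ h tl, alphaSeq rest = h :: tl := by
        cases hr : alphaSeq rest with
        | nil => exact absurd hr (alphaSeq_ne_nil rest)
        | cons h tl => exact ⟨h, tl, rfl⟩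
      simp [alphaSeq, ih, hh]
    | lit l' d =>
      cases d with
      | true => simp [alphaSeq, ih]
      | false =>
        obtain ⟨h, tl, hh⟩ : ∃ h tl, alphaSeq rest = h :: tl := by
          cases hr : alphaSeq rest with
          | nil => exact absurd hr (alphaSeq_ne_nil rest)
          | cons h tl => exact ⟨h, tl, rfl⟩
        simp [alphaSeq, ih, hh]

private lemma incLast_cons_cons (h a : ℕ) (t : List ℕ) :
    incLast (h :: a :: t) = h :: incLast (a :: t) := rfl

private lemma alphaSeq_append_nondec (A : List (RecElem α)) (x : RecElem α)
    (hx : ∀ l, x ≠ RecElem.lit l true) :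
    alphaSeq (A ++ [x]) = incLast (alphaSeq A) := by
  induction A with
  | nil =>
    cases x with
    | bot => simp [alphaSeq, incLast]
    | lit l d =>
      cases d with
      | true => exact absurd rfl (hx l)
      | false => simp [alphaSeq, incLast]
  | cons y rest ih =>
    obtain ⟨h, tl, hh⟩ : ∃ h tl, alphaSeq rest = h :: tl := by
      cases hr : alphaSeq rest with
      | nil => exact absurd hr (alphaSeq_ne_nil rest)
      | cons h tl => exact ⟨h, tl, rfl⟩
    cases y with
    | bot =>
      cases tl with
      | nil => simp [alphaSeq, ih, hh, incLast]
      | cons a t => simp [alphaSeq, ih, hh, incLast]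
    | lit l' d =>
      cases d with
      | true => simp [alphaSeq, ih, hh, incLast]
      | false =>
        cases tl with
        | nil => simp [alphaSeq, ih, hh, incLast]
        | cons a t => simp [alphaSeq, ih, hh, incLast]

private lemma lex_append (L S : List ℕ) (hS : S ≠ []) : List.Lex (· < ·) L (L ++ S) := by
  induction L with
  | nil =>
    cases S with
    | nil => exact absurd rfl hS
    | cons a t => exact List.Lex.nil
  | cons a t ih => exact List.Lex.cons ih

private lemma lex_incLast : ∀ (L : List ℕ), L ≠ [] → ∀ S : List ℕ,
    List.Lex (· < ·) (L ++ S) (incLast L)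
  | [], h, S => absurd rfl h
  | [h], _, S => by
      simpa [incLast] using List.Lex.rel (l₁ := S) (l₂ := []) (by omega : h < h + 1)
  | h :: a :: t, _, S => by
      have := lex_incLast (a :: t) (by simp) S
      simpa [incLast_cons_cons] using List.Lex.cons (a := h) this

private lemma alphaSeq_length_le : ∀ (M : List (RecElem α)),
    (alphaSeq M).length ≤ M.length + 1 := by
  intro M
  induction M with
  | nil => simp [alphaSeq]
  | cons x rest ih =>
    obtain ⟨h, tl, hh⟩ : ∃ h tl, alphaSeq rest = h :: tl := by
      cases hr : alphaSeq rest with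
      | nil => exact absurd hr (alphaSeq_ne_nil rest)
      | cons h tl => exact ⟨h, tl, rfl⟩
    cases x with
    | bot => simp [alphaSeq, hh]; rw [hh] at ih; simp at ih; omega
    | lit l d =>
      cases d with
      | true => simp [alphaSeq]; omega
      | false => simp [alphaSeq, hh]; rw [hh] at ih; simp at ih; omega

private lemma alphaSeq_mem_le : ∀ (M : List (RecElem α)), ∀ x ∈ alphaSeq M, x ≤ M.length := by
  intro M
  induction M with
  | nil => simp [alphaSeq]
  | cons y rest ih =>
    obtain ⟨h, tl, hh⟩ : ∃ h tl, alphaSeq rest = h :: tl := by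
      cases hr : alphaSeq rest with
      | nil => exact absurd hr (alphaSeq_ne_nil rest)
      | cons h tl => exact ⟨h, tl, rfl⟩
    rw [hh] at ih
    cases y with
    | bot =>
      intro x hx
      simp [alphaSeq, hh] at hx
      rcases hx with rfl | hx
      · have := ih h (by simp); simp; omega
      · have := ih x (by simp [hx]); simp; omega
    | lit l d =>
      cases d with
      | true =>
        intro x hx
        simp [alphaSeq] at hx
        rcases hx with rfl | hx
        · simp
        · have := ih x (by rw [← hh]; exact hx); simp; omega
      | false =>
        intro x hx
        simp [alphaSeq, hh] at hx
        rcases hx with rfl | hx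
        · have := ih h (by simp); simp; omega
        · have := ih x (by simp [hx]); simp; omega
private lemma encL_lt_pow : ∀ (b : ℕ) (L : List ℕ) (n : ℕ), 1 ≤ b →
    (∀ x ∈ L, x + 1 < b) → L.length ≤ n → encL b n L < b ^ n := by
  intro b L
  induction L with
  | nil =>
    intro n hb _ _
    simp [encL]
    exact Nat.pow_pos hb
  | cons h t ih =>
    intro n hb hmem hlen
    cases n with
    | zero => simp at hlen
    | succ m =>
      have h1 : encL b m t < b ^ m :=
        ih m hb (fun x hx => hmem x (by simp [hx])) (by simp at hlen; omega)
      have hb2 : h + 2 ≤ b := by have := hmem h (by simp); omega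
      have h2 : (h + 1) * b ^ m + encL b m t < (h + 2) * b ^ m := by
        have : (h + 2) * b ^ m = (h + 1) * b ^ m + b ^ m := by ring
        omega
      have h3 : (h + 2) * b ^ m ≤ b * b ^ m := Nat.mul_le_mul_right _ hb2
      calc encL b (m + 1) (h :: t) = (h + 1) * b ^ m + encL b m t := rfl
        _ < (h + 2) * b ^ m := h2
        _ ≤ b * b ^ m := h3
        _ = b ^ (m + 1) := by rw [pow_succ]; ring

private lemma encL_lex_lt (b : ℕ) (hb : 1 ≤ b) :
    ∀ {L L' : List ℕ}, List.Lex (· < ·) L L' → ∀ n, L.length ≤ n → L'.length ≤ n →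
    (∀ x ∈ L, x + 1 < b) → (∀ x ∈ L', x + 1 < b) → encL b n L < encL b n L' := by
  intro L L' hlex
  induction hlex with
  | nil =>
    rename_i a t
    intro n _ hlen' _ hmem'
    cases n with
    | zero => simp at hlen'
    | succ m =>
      have : 0 < (a + 1) * b ^ m :=
        Nat.mul_pos (by omega) (Nat.pow_pos hb)
      calc encL b (m + 1) ([] : List ℕ) = 0 := rfl
        _ < (a + 1) * b ^ m + encL b m t := by omega
  | @cons a t t' h ih =>
    intro n hlen hlen' hmem hmem'
    cases n with
    | zero => simp at hlen
    | succ m =>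
      have := ih m (by simp at hlen; omega) (by simp at hlen'; omega)
        (fun x hx => hmem x (by simp [hx])) (fun x hx => hmem' x (by simp [hx]))
      show (a + 1) * b ^ m + encL b m t < (a + 1) * b ^ m + encL b m t'
      omega
  | @rel a t a' t' hr =>
    intro n hlen hlen' hmem hmem'
    cases n with
    | zero => simp at hlen
    | succ m =>
      have h1 : encL b m t < b ^ m :=
        encL_lt_pow b t m hb (fun x hx => hmem x (by simp [hx])) (by simp at hlen; omega)
      have h2 : (a + 2) * b ^ m ≤ (a' + 1) * b ^ m :=
        Nat.mul_le_mul_right _ (by omega)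
      have h3 : (a + 2) * b ^ m = (a + 1) * b ^ m + b ^ m := by ring
      show (a + 1) * b ^ m + encL b m t < (a' + 1) * b ^ m + encL b m t'
      omega
private lemma record_length_le [DecidableEq α] {σ : Finset α} {M : List (RecElem α)}
    (h : IsRecord σ M) : M.length ≤ 2 * σ.card + 1 := by
  classical
  obtain ⟨hnd, hover, -, -, -⟩ := h
  set K : Finset (Option (Lit α)) :=
    insert none ((σ ×ˢ (Finset.univ : Finset Bool)).image some) with hK
  have hsub : (M.map recKey).toFinset ⊆ K := by
    intro x hx
    rw [List.mem_toFinset, List.mem_map] at hx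
    obtain ⟨e, he, rfl⟩ := hx
    cases e with
    | bot => simp [recKey, hK]
    | lit l d =>
      have hl : l.1 ∈ σ := hover l ⟨d, he⟩
      simp only [hK, recKey, Finset.mem_insert, Finset.mem_image]
      exact Or.inr ⟨l, by simp [Finset.mem_product, hl], rfl⟩
  have h1 : (M.map recKey).toFinset.card = M.length := by
    rw [List.toFinset_card_of_nodup hnd, List.length_map]
  have h2 : (M.map recKey).toFinset.card ≤ K.card := Finset.card_le_card hsub
  have h3 : K.card ≤ 2 * σ.card + 1 := by
    have := Finset.card_insert_le (none : Option (Lit α))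
      ((σ ×ˢ (Finset.univ : Finset Bool)).image some)
    rw [← hK] at this
    have h4 := Finset.card_image_le (f := (some : Lit α → Option (Lit α)))
      (s := σ ×ˢ (Finset.univ : Finset Bool))
    rw [Finset.card_product, Finset.card_univ] at h4
    simp only [Fintype.card_bool] at h4
    omega
  omega

theorem stmt8 [DecidableEq α] (P : CAProgram α V D) :
    ¬ ∃ (states : ℕ → EZState α) (labs : ℕ → TransLabel),
      (∀ i, Step P (labs i) (states i) (states (i + 1))) ∧ InfRestartSafe labs := by
  rintro ⟨states, labs, hstep, hsafe⟩
  classical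
  have hnode : ∀ i, ∃ M Γ Λ, states i = EZState.node M Γ Λ := by
    intro i
    cases h : states i with
    | node M Γ Λ => exact ⟨M, Γ, Λ, rfl⟩
    | fail =>
      have hc := (hstep i).2.2
      rw [h] at hc
      generalize labs i = t at hc
      generalize states (i + 1) = s2 at hc
      cases hc
  choose M Γ Λ hMGL using hnode
  have key : ∀ i,
      (labs i = TransLabel.learn ∧ Γ i ⊂ Γ (i+1) ∧ Λ (i+1) = Λ i) ∨
      (labs i = TransLabel.learnT ∧ Γ (i+1) = Γ i ∧ Λ i ⊂ Λ (i+1)) ∨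
      ((labs i).isRestart ∧ Γ (i+1) = Γ i) ∨
      (labs i ≠ TransLabel.learn ∧ labs i ≠ TransLabel.learnT ∧
        Γ (i+1) = Γ i ∧ Λ (i+1) = Λ i ∧
        List.Lex (· < ·) (alphaSeq (M i)) (alphaSeq (M (i+1)))) := by
    intro i
    have hc := (hstep i).2.2
    rw [hMGL i, hMGL (i+1)] at hc
    generalize hl : labs i = t at hc
    generalize hs : EZState.node (M (i+1)) (Γ (i+1)) (Λ (i+1)) = s2 at hc
    generalize hs1 : EZState.node (M i) (Γ i) (Λ i) = s1 at hc
    cases hc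
    case decide M₀ Γ₀ Λ₀ l h1 h2 =>
      injection hs1 with f1 f2 f3
      subst f1 f2 f3
      injection hs with e1 e2 e3
      refine Or.inr (Or.inr (Or.inr ⟨by simp, by simp, e2, e3, ?_⟩))
      rw [e1, alphaSeq_append_dec]
      exact lex_append _ _ (alphaSeq_ne_nil [])
    case fail M₀ Γ₀ Λ₀ h1 h2 =>
      exact absurd hs.symm (by simp)
    case backtrack M₁ M₂ Γ₀ Λ₀ l h1 h2 =>
      injection hs1 with f1 f2 f3
      injection hs with e1 e2 e3
      refine Or.inr (Or.inr (Or.inr ⟨by simp, by simp, e2 ▸ f2.symm, e3 ▸ f3.symm, ?_⟩))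
      rw [f1, e1, alphaSeq_append_dec, alphaSeq_append_nondec _ _ (by simp)]
      exact lex_incLast _ (alphaSeq_ne_nil M₁) _
    case aspProp M₀ Γ₀ Λ₀ l h =>
      injection hs1 with f1 f2 f3
      subst f1 f2 f3
      injection hs with e1 e2 e3
      refine Or.inr (Or.inr (Or.inr ⟨by simp, by simp, e2, e3, ?_⟩))
      rw [e1, alphaSeq_append_nondec _ _ (by simp)]
      have := lex_incLast (alphaSeq (M i)) (alphaSeq_ne_nil (M i)) []
      rwa [List.append_nil] at this
    case cpProp M₀ Γ₀ Λ₀ h =>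
      injection hs1 with f1 f2 f3
      subst f1 f2 f3
      injection hs with e1 e2 e3
      refine Or.inr (Or.inr (Or.inr ⟨by simp, by simp, e2, e3, ?_⟩))
      rw [e1, alphaSeq_append_nondec _ _ (by simp)]
      have := lex_incLast (alphaSeq (M i)) (alphaSeq_ne_nil (M i)) []
      rwa [List.append_nil] at this
    case learn M₀ Γ₀ Λ₀ R h1 h2 =>
      injection hs1 with f1 f2 f3
      subst f1 f2 f3
      injection hs with e1 e2 e3
      refine Or.inl ⟨rfl, ?_, e3⟩
      rw [e2]
      exact Finset.ssubset_insert (fun hR => h2 (Finset.mem_union_left _ hR))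
    case learnT M₀ Γ₀ Λ₀ R h1 h2 =>
      injection hs1 with f1 f2 f3
      subst f1 f2 f3
      injection hs with e1 e2 e3
      refine Or.inr (Or.inl ⟨rfl, e2, ?_⟩)
      rw [e3]
      exact Finset.ssubset_insert (fun hR => h2 (Finset.mem_union_right _ hR))
    case restart M₀ Γ₀ Λ₀ h =>
      injection hs1 with f1 f2 f3
      subst f1 f2 f3
      injection hs with e1 e2 e3
      exact Or.inr (Or.inr (Or.inl ⟨trivial, e2⟩))
    case restartT M₀ Γ₀ Λ₀ h =>
      injection hs1 with f1 f2 f3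
      subst f1 f2 f3
      injection hs with e1 e2 e3
      exact Or.inr (Or.inr (Or.inl ⟨trivial, e2⟩))
  -- Γ is monotone
  have gstep : ∀ i, Γ i ⊆ Γ (i+1) := by
    intro i
    rcases key i with ⟨_, h, _⟩ | ⟨_, h, _⟩ | ⟨_, h⟩ | ⟨_, _, h, _, _⟩
    · exact h.subset
    · intro x hx; rw [h]; exact hx
    · intro x hx; rw [h]; exact hx
    · intro x hx; rw [h]; exact hx
  have gmono : ∀ i j, i ≤ j → Γ i ⊆ Γ j := by
    intro i j hij
    induction j, hij using Nat.le_induction with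
    | base => exact Finset.Subset.refl _
    | succ j hij ih => exact ih.trans (gstep j)
  set σ : Finset α := progAtoms P.prog with hσ
  set Den : Finset (Rule α) :=
    (σ.powerset ×ˢ σ.powerset ×ˢ σ.powerset).image
      (fun x => (⟨none, x.1, x.2.1, x.2.2⟩ : Rule α)) with hDen
  have hstate : ∀ i, IsRecord σ (M i) ∧ DenialsEntailed P (Γ i) ∧ DenialsEntailed P (Λ i) := by
    intro i
    have h := (hstep i).1
    rw [hMGL i] at h
    exact h
  have hsubDen : ∀ (Ξ : Finset (Rule α)), DenialsEntailed P Ξ → Ξ ⊆ Den := by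
    intro Ξ hΞ r hr
    obtain ⟨hhead, hatoms, -⟩ := hΞ r hr
    have hin : ∀ a, (a ∈ r.pos ∨ a ∈ r.neg ∨ a ∈ r.dneg) → a ∈ σ := by
      intro a ha
      apply hatoms
      unfold Rule.atoms
      rcases ha with h | h | h <;> simp [h]
    rw [hDen, Finset.mem_image]
    refine ⟨⟨r.pos, r.neg, r.dneg⟩, ?_, ?_⟩
    · simp only [Finset.mem_product, Finset.mem_powerset]
      exact ⟨fun a ha => hin a (Or.inl ha),
        fun a ha => hin a (Or.inr (Or.inl ha)),
        fun a ha => hin a (Or.inr (Or.inr ha))⟩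
    · obtain ⟨h0, p, n, d⟩ := r
      simp only at hhead
      rw [hhead]
  have learn_fin : ∃ i₀, ∀ i, i₀ ≤ i → labs i ≠ TransLabel.learn := by
    by_contra hcon
    push_neg at hcon
    have grow : ∀ n, ∃ i, n ≤ (Γ i).card := by
      intro n
      induction n with
      | zero => exact ⟨0, Nat.zero_le _⟩
      | succ n ih =>
        obtain ⟨i, hi⟩ := ih
        obtain ⟨j, hij, hjl⟩ := hcon i
        have hss : Γ j ⊂ Γ (j+1) := by
          rcases key j with ⟨_, h, _⟩ | ⟨h, _⟩ | ⟨h, _⟩ | ⟨h, _⟩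
          · exact h
          · simp [hjl] at h
          · simp [hjl, TransLabel.isRestart] at h
          · exact absurd hjl h
        have h1 := Finset.card_lt_card hss
        have h2 := Finset.card_le_card (gmono i j hij)
        exact ⟨j+1, by omega⟩
    obtain ⟨i, hi⟩ := grow (Den.card + 1)
    have := Finset.card_le_card (hsubDen _ (hstate i).2.1)
    omega
  have restart_fin : ∃ i₁, ∀ i, i₁ ≤ i → ¬ (labs i).isRestart := by
    by_contra hcon
    push_neg at hcon
    obtain ⟨i, -, hi⟩ := hcon 0
    obtain ⟨i', hii', hi'⟩ := hcon (i+1)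
    obtain ⟨j, hj, -, huniq⟩ := hsafe i hi
    have := huniq i' (by omega) hi'
    omega
  obtain ⟨i₀, h₀⟩ := learn_fin
  obtain ⟨i₁, h₁⟩ := restart_fin
  set N₀ := max i₀ i₁ with hN₀
  have lstepT : ∀ i, labs i = TransLabel.learnT → Λ i ⊂ Λ (i+1) := by
    intro i hlT
    rcases key i with ⟨h, _⟩ | ⟨_, _, h⟩ | ⟨h, _⟩ | ⟨_, h, _⟩
    · simp [hlT] at h
    · exact h
    · simp [hlT, TransLabel.isRestart] at h
    · exact absurd hlT h
  have lsub : ∀ i, N₀ ≤ i → Λ i ⊆ Λ (i+1) := by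
    intro i hNi
    by_cases hlT : labs i = TransLabel.learnT
    · exact (lstepT i hlT).subset
    · rcases key i with ⟨h, _⟩ | ⟨h, _⟩ | ⟨h, _⟩ | ⟨_, _, _, h, _⟩
      · exact absurd h (h₀ i (by omega))
      · exact absurd h hlT
      · exact absurd h (h₁ i (by omega))
      · intro x hx; rw [h]; exact hx
  have lmono : ∀ i j, N₀ ≤ i → i ≤ j → Λ i ⊆ Λ j := by
    intro i j hNi hij
    induction j, hij using Nat.le_induction with
    | base => exact Finset.Subset.refl _
    | succ j hij ih => exact ih.trans (lsub j (le_trans hNi hij))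
  have learnT_fin : ∃ i₂, ∀ i, i₂ ≤ i → labs i ≠ TransLabel.learnT := by
    by_contra hcon
    push_neg at hcon
    have grow : ∀ n, ∃ i, N₀ ≤ i ∧ n ≤ (Λ i).card := by
      intro n
      induction n with
      | zero => exact ⟨N₀, le_refl _, Nat.zero_le _⟩
      | succ n ih =>
        obtain ⟨i, hNi, hi⟩ := ih
        obtain ⟨j, hij, hjl⟩ := hcon i
        have h1 := Finset.card_lt_card (lstepT j hjl)
        have h2 := Finset.card_le_card (lmono i j hNi hij)
        exact ⟨j+1, by omega, by omega⟩
    obtain ⟨i, -, hi⟩ := grow (Den.card + 1)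
    have := Finset.card_le_card (hsubDen _ (hstate i).2.2)
    omega
  obtain ⟨i₂, h₂⟩ := learnT_fin
  set N := max N₀ i₂ with hN
  have hlex : ∀ i, N ≤ i → List.Lex (· < ·) (alphaSeq (M i)) (alphaSeq (M (i+1))) := by
    intro i hNi
    rcases key i with ⟨h, _⟩ | ⟨h, _⟩ | ⟨h, _⟩ | ⟨_, _, _, _, h⟩
    · exact absurd h (h₀ i (by omega))
    · exact absurd h (h₂ i (by omega))
    · exact absurd h (h₁ i (by omega))
    · exact h
  set B := 2 * σ.card + 1 with hB
  have hMlen : ∀ i, (M i).length ≤ B := fun i => record_length_le (hstate i).1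
  have hbound : ∀ i, (∀ x ∈ alphaSeq (M i), x + 1 < B + 2) ∧ (alphaSeq (M i)).length ≤ B + 1 := by
    intro i
    constructor
    · intro x hx
      have h1 := alphaSeq_mem_le (M i) x hx
      have h2 := hMlen i
      omega
    · have h1 := alphaSeq_length_le (M i)
      have h2 := hMlen i
      omega
  have hf : ∀ k, encL (B+2) (B+1) (alphaSeq (M (N+k))) <
      encL (B+2) (B+1) (alphaSeq (M (N+k+1))) := by
    intro k
    exact encL_lex_lt (B+2) (by omega) (hlex (N+k) (by omega)) (B+1)
      (hbound (N+k)).2 (hbound (N+k+1)).2 (hbound (N+k)).1 (hbound (N+k+1)).1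
  have hup : ∀ k, k ≤ encL (B+2) (B+1) (alphaSeq (M (N+k))) := by
    intro k
    induction k with
    | zero => exact Nat.zero_le _
    | succ k ih =>
      have h1 := hf k
      rw [← Nat.add_assoc]
      omega
  have hlt := encL_lt_pow (B+2) (alphaSeq (M (N + (B+2)^(B+1)))) (B+1) (by omega)
    (hbound _).1 (hbound _).2
  have h2 := hup ((B+2)^(B+1))
  omega

end EZCSP
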